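/- Let G be a topological group and S a closed subgroup of finite index. Then the universal minimal proximal flow of S extends to a G-action such that (G, Π(S)) is isomorphic to (G, Π(G)). Consequently (G,Π(G)) is free if and only if (G,Π(S)) is free. -/

import Mathlib

universe u v

def IsMinimalFlow (G X : Type*) [Group G] [TopologicalSpace X] [MulAction G X] : Prop :=
  ∀ x : X, Dense (Set.range fun g : G => g • x)

def IsProximalFlow (G X : Type*) [Group G] [TopologicalSpace X] [MulAction G X] : Prop :=
  ∀ x y : X, ∃ z : X, (z, z) ∈ closure (Set.range fun g : G => (g • x, g • y))

section FlowAux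

variable {G : Type*} [Group G] {X : Type*} [TopologicalSpace X]

/-- Unbundled action axioms plus continuity of each translation. -/
structure IsAct (G : Type*) [Group G] (X : Type*) [TopologicalSpace X]
    (act : G → X → X) : Prop where
  one : ∀ x, act 1 x = x
  mul : ∀ g h x, act (g * h) x = act g (act h x)
  cont : ∀ g, Continuous (act g)

theorem IsAct.inv_cancel {act : G → X → X} (h : IsAct G X act) (g : G) (x : X) :
    act g⁻¹ (act g x) = x := by
  rw [← h.mul, inv_mul_cancel, h.one]

/-- Unbundled minimality. -/
def MinP (act : G → X → X) : Prop := ∀ x : X, Dense (Set.range fun g => act g x)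

/-- Unbundled proximality. -/
def ProxP (act : G → X → X) : Prop :=
  ∀ x y : X, ∃ z : X, (z, z) ∈ closure (Set.range fun g => (act g x, act g y))

/-- Uniqueness of morphisms from a minimal flow to a proximal flow. -/
theorem hom_unique {Y : Type*} [TopologicalSpace Y] [CompactSpace X] [T2Space Y]
    [Nonempty X]
    {actX : G → X → X} {actY : G → Y → Y} (hX : IsAct G X actX) (_hY : IsAct G Y actY)
    (hmin : MinP actX) (hprox : ProxP actY)
    {f g : X → Y} (hf : Continuous f) (hg : Continuous g)
    (hfe : ∀ γ x, f (actX γ x) = actY γ (f x)) (hge : ∀ γ x, g (actX γ x) = actY γ (g x)) :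
    f = g := by
  obtain ⟨x₀⟩ := ‹Nonempty X›
  obtain ⟨z, hz⟩ := hprox (f x₀) (g x₀)
  have hrc : IsClosed (Set.range fun x => (f x, g x)) :=
    (isCompact_range (hf.prodMk hg)).isClosed
  have hsub : (Set.range fun γ : G => (actY γ (f x₀), actY γ (g x₀)))
      ⊆ Set.range fun x => (f x, g x) := by
    rintro _ ⟨γ, rfl⟩
    exact ⟨actX γ x₀, by simp only [hfe, hge]⟩
  have hzmem : (z, z) ∈ Set.range fun x => (f x, g x) := by
    have := closure_mono hsub hz
    rwa [hrc.closure_eq] at this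
  obtain ⟨x₁, hx₁⟩ := hzmem
  have hfx₁ : f x₁ = z := congrArg Prod.fst hx₁
  have hgx₁ : g x₁ = z := congrArg Prod.snd hx₁
  have hAcl : IsClosed {x | f x = g x} := isClosed_eq hf hg
  have hsub' : (Set.range fun γ : G => actX γ x₁) ⊆ {x | f x = g x} := by
    rintro _ ⟨γ, rfl⟩
    simp only [Set.mem_setOf_eq, hfe, hge, hfx₁, hgx₁]
  have hd : Dense {x | f x = g x} := (hmin x₁).mono hsub'
  funext x
  have : {x | f x = g x} = Set.univ := hAcl.closure_eq ▸ hd.closure_eq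
  exact (Set.eq_univ_iff_forall.mp this x)

/-- Existence of a minimal closed invariant subset (Zorn). -/
theorem exists_minimal_set [CompactSpace X] [Nonempty X]
    {act : G → X → X} (_h : IsAct G X act) :
    ∃ M : Set X, M.Nonempty ∧ IsClosed M ∧ (∀ γ, ∀ x ∈ M, act γ x ∈ M) ∧
      ∀ M' : Set X, M' ⊆ M → M'.Nonempty → IsClosed M' →
        (∀ γ, ∀ x ∈ M', act γ x ∈ M') → M' = M := by
  set S : Set (Set X) :=
    {A | A.Nonempty ∧ IsClosed A ∧ ∀ γ, ∀ x ∈ A, act γ x ∈ A} with hS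
  have hzorn := zorn_superset_nonempty S ?_ Set.univ
    ⟨Set.univ_nonempty, isClosed_univ, fun _ _ _ => Set.mem_univ _⟩
  · obtain ⟨M, -, hMS, hMmin⟩ := hzorn
    refine ⟨M, hMS.1, hMS.2.1, hMS.2.2, fun M' h1 h2 h3 h4 => ?_⟩
    exact Set.Subset.antisymm h1 (hMmin ⟨h2, h3, h4⟩ h1)
  · intro c hcS hchain hcne
    refine ⟨⋂₀ c, ⟨?_, ?_, ?_⟩, fun A hA => Set.sInter_subset_of_mem hA⟩
    · rw [Set.sInter_eq_iInter]
      have : Nonempty c := hcne.to_subtype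
      refine IsCompact.nonempty_iInter_of_directed_nonempty_isCompact_isClosed
        (fun A : c => (A : Set X)) ?_ (fun A => (hcS A.2).1)
        (fun A => (hcS A.2).2.1.isCompact) (fun A => (hcS A.2).2.1)
      intro A B
      rcases eq_or_ne A B with rfl | hne
      · exact ⟨A, subset_rfl, subset_rfl⟩
      rcases hchain A.2 B.2 (fun h => hne (Subtype.ext h)) with h | h
      · exact ⟨A, subset_rfl, h⟩
      · exact ⟨B, h, subset_rfl⟩
    · exact isClosed_sInter fun A hA => (hcS hA).2.1
    · intro γ x hx
      exact fun A hA => (hcS hA).2.2 γ x (hx A hA)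

end FlowAux
section FlowAux2

variable {G : Type*} [Group G] {X : Type*} [TopologicalSpace X]

/-- A finite (left) transversal of a finite-index subgroup. -/
theorem exists_transversal (H : Subgroup G) (hfin : H.index ≠ 0) :
    ∃ T : Finset G, ∀ g : G, ∃ t ∈ T, t⁻¹ * g ∈ H := by
  have hfinite : Finite (G ⧸ H) := Nat.finite_of_card_ne_zero hfin
  have := Fintype.ofFinite (G ⧸ H)
  classical
  refine ⟨(Finset.univ : Finset (G ⧸ H)).image Quotient.out, fun g => ?_⟩
  refine ⟨(QuotientGroup.mk g : G ⧸ H).out, Finset.mem_image_of_mem _ (Finset.mem_univ _), ?_⟩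
  have h1 : (QuotientGroup.mk ((QuotientGroup.mk g : G ⧸ H).out) : G ⧸ H)
      = QuotientGroup.mk g := QuotientGroup.out_eq' _
  exact QuotientGroup.eq.mp h1

variable {G : Type*} [Group G] {X : Type*} [TopologicalSpace X]

/-- Proximality passes to finite-index subgroups. -/
theorem prox_restrict [CompactSpace X] [T2Space X]
    {act : G → X → X} (h : IsAct G X act) (H : Subgroup G) {T : Finset G}
    (hT : ∀ g : G, ∃ t ∈ T, t⁻¹ * g ∈ H) (hprox : ProxP act) :
    ProxP (fun n : H => act (n : G)) := by
  intro x y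
  obtain ⟨z, hz⟩ := hprox x y
  set R : Set (X × X) := closure (Set.range fun n : H => (act (n : G) x, act (n : G) y)) with hR
  set U : Set (X × X) := ⋃ t ∈ T, (fun p : X × X => (act t p.1, act t p.2)) '' R with hU
  have hUc : IsClosed U := by
    refine Set.Finite.isClosed_biUnion T.finite_toSet fun t _ => ?_
    exact (((isClosed_closure (s := Set.range fun n : H => (act (n : G) x, act (n : G) y))).isCompact).image
      ((h.cont t).prodMap (h.cont t))).isClosed
  have hsub : (Set.range fun g : G => (act g x, act g y)) ⊆ U := by
    rintro _ ⟨g, rfl⟩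
    obtain ⟨t, htT, hth⟩ := hT g
    refine Set.mem_biUnion htT ⟨(act (t⁻¹ * g) x, act (t⁻¹ * g) y), subset_closure ⟨⟨_, hth⟩, rfl⟩, ?_⟩
    simp only [← h.mul, mul_inv_cancel_left]
  have hzU : (z, z) ∈ U := hUc.closure_subset ((closure_mono hsub) hz)
  obtain ⟨t, htT, p, hpR, hpz⟩ := by
    simpa only [hU, Set.mem_iUnion, Set.mem_image, exists_prop] using hzU
  have h1 : act t p.1 = z := congrArg Prod.fst hpz
  have h2 : act t p.2 = z := congrArg Prod.snd hpz
  have hp1 : p.1 = act t⁻¹ z := by rw [← h1, h.inv_cancel]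
  have hp2 : p.2 = act t⁻¹ z := by rw [← h2, h.inv_cancel]
  refine ⟨act t⁻¹ z, ?_⟩
  have : p = (act t⁻¹ z, act t⁻¹ z) := Prod.ext hp1 hp2
  rwa [← this]

/-- Minimality (together with proximality) passes to finite-index normal subgroups. -/
theorem min_restrict [CompactSpace X] [T2Space X] [Nonempty X]
    {act : G → X → X} (h : IsAct G X act) (N : Subgroup G) [hN : N.Normal]
    {T : Finset G} (hT : ∀ g : G, ∃ t ∈ T, t⁻¹ * g ∈ N)
    (hmin : MinP act) (hprox : ProxP act) :
    MinP (fun n : N => act (n : G)) := by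
  classical
  set actN : N → X → X := fun n : N => act (n : G) with hactN
  have hIsActN : IsAct N X actN := by
    refine ⟨fun x => ?_, fun n m x => ?_, fun n => h.cont _⟩
    · simpa [hactN] using h.one x
    · simpa [hactN] using h.mul (n : G) (m : G) x
  -- the predicate of being an N-minimal set
  set NMin : Set X → Prop := fun A => A.Nonempty ∧ IsClosed A ∧
      (∀ n : N, ∀ x ∈ A, act (n : G) x ∈ A) ∧
      ∀ A' : Set X, A' ⊆ A → A'.Nonempty → IsClosed A' →
        (∀ n : N, ∀ x ∈ A', act (n : G) x ∈ A') → A' = A with hNMin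
  obtain ⟨M, hM1, hM2, hM3, hM4⟩ := exists_minimal_set hIsActN
  have hMmin : NMin M := ⟨hM1, hM2, hM3, hM4⟩
  -- images of N-minimal sets are N-minimal
  have himg_inv : ∀ (g : G) (A : Set X), (∀ n : N, ∀ x ∈ A, act (n : G) x ∈ A) →
      (∀ n : N, ∀ x ∈ act g '' A, act (n : G) x ∈ act g '' A) := by
    rintro g A hA n _ ⟨a, ha, rfl⟩
    have hn' : g⁻¹ * (n : G) * g ∈ N := by
      simpa using hN.conj_mem _ n.2 g⁻¹
    refine ⟨act (g⁻¹ * (n : G) * g) a, hA ⟨_, hn'⟩ a ha, ?_⟩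
    simp only [← h.mul]
    congr 1
    group
  have himg : ∀ (g : G) (A : Set X), NMin A → NMin (act g '' A) := by
    rintro g A ⟨hA1, hA2, hA3, hA4⟩
    refine ⟨hA1.image _, ((hA2.isCompact).image (h.cont g)).isClosed, himg_inv g A hA3, ?_⟩
    intro A' hsub hne hcl hinv
    have hback : act g⁻¹ '' A' = A := by
      refine hA4 _ ?_ (hne.image _) ((hcl.isCompact.image (h.cont g⁻¹)).isClosed)
        (himg_inv g⁻¹ A' hinv)
      rintro _ ⟨a', ha', rfl⟩
      obtain ⟨a, ha, rfl⟩ := hsub ha'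
      rwa [h.inv_cancel]
    have hgg : ∀ x, act g (act g⁻¹ x) = x := fun x => by
      have := h.inv_cancel g⁻¹ x
      rwa [inv_inv] at this
    calc A' = act g '' (act g⁻¹ '' A') := by
            rw [Set.image_image]
            simp only [hgg, Set.image_id']
      _ = act g '' A := by rw [hback]
  -- N-translates of an N-minimal set by elements of N leave it unchanged
  have hstab : ∀ (A : Set X), (∀ n : N, ∀ x ∈ A, act (n : G) x ∈ A) →
      ∀ n : N, act (n : G) '' A = A := by
    intro A hA n
    refine Set.Subset.antisymm ?_ ?_
    · rintro _ ⟨a, ha, rfl⟩; exact hA n a ha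
    · intro a ha
      refine ⟨act ((n⁻¹ : N) : G) a, hA n⁻¹ a ha, ?_⟩
      have := h.inv_cancel ((n⁻¹ : N) : G) a
      simpa using this
  -- the finite family of translates of M
  set FF : Set (Set X) := (fun t => act t '' M) '' (T : Set G) with hFF
  have hFFfin : FF.Finite := T.finite_toSet.image _
  have hFFmin : ∀ A ∈ FF, NMin A := by
    rintro _ ⟨t, _, rfl⟩; exact himg t M hMmin
  have hFFmove : ∀ (g : G), ∀ A ∈ FF, act g '' A ∈ FF := by
    rintro g _ ⟨t, htT, rfl⟩
    obtain ⟨t', ht'T, hn⟩ := hT (g * t)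
    have e1 : act g '' (act t '' M) = act (g * t) '' M := by
      rw [Set.image_image]; simp only [← h.mul]
    have e2 : act (g * t) '' M = act t' '' M := by
      have : g * t = t' * (t'⁻¹ * (g * t)) := by group
      rw [this]
      have : act (t' * (t'⁻¹ * (g * t))) '' M = act t' '' (act (t'⁻¹ * (g * t)) '' M) := by
        rw [Set.image_image]; simp only [h.mul]
      rw [this, hstab M hM3 ⟨_, hn⟩]
    rw [e1, e2]
    exact ⟨t', ht'T, rfl⟩
  have hdisj : ∀ A B : Set X, NMin A → NMin B → (A ∩ B).Nonempty → A = B := by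
    rintro A B ⟨_, hA2, hA3, hA4⟩ ⟨_, hB2, hB3, hB4⟩ hne
    have hinv : ∀ n : N, ∀ x ∈ A ∩ B, act (n : G) x ∈ A ∩ B :=
      fun n x hx => ⟨hA3 n x hx.1, hB3 n x hx.2⟩
    have h1 := hA4 (A ∩ B) Set.inter_subset_left hne (hA2.inter hB2) hinv
    have h2 := hB4 (A ∩ B) Set.inter_subset_right hne (hA2.inter hB2) hinv
    rw [← h1, h2]
  have hinj : ∀ (g : G) (A B : Set X), act g '' A = act g '' B → A = B := by
    intro g A B hAB
    have := congrArg (Set.image (act g⁻¹)) hAB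
    rw [Set.image_image, Set.image_image] at this
    simpa only [h.inv_cancel, Set.image_id'] using this
  -- all members of FF coincide
  have hkey : ∀ A ∈ FF, ∀ B ∈ FF, A = B := by
    intro A hA B hB
    by_contra hne
    obtain ⟨z1, hz1⟩ := (hFFmin A hA).1
    obtain ⟨z2, hz2⟩ := (hFFmin B hB).1
    set W : Set (X × X) := ⋃ A' ∈ FF, ⋃ B' ∈ FF \ {A'}, A' ×ˢ B' with hW
    have hWc : IsClosed W := by
      refine Set.Finite.isClosed_biUnion hFFfin fun A' hA' => ?_
      refine Set.Finite.isClosed_biUnion (hFFfin.subset Set.diff_subset) fun B' hB' => ?_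
      exact ((hFFmin A' hA').2.1).prod ((hFFmin B' hB'.1).2.1)
    have hsub : (Set.range fun g : G => (act g z1, act g z2)) ⊆ W := by
      rintro _ ⟨g, rfl⟩
      have hgA : act g '' A ∈ FF := hFFmove g A hA
      have hgB : act g '' B ∈ FF := hFFmove g B hB
      have hgne : act g '' B ≠ act g '' A := fun hc => hne (hinj g A B hc.symm)
      refine Set.mem_biUnion hgA ?_
      refine Set.mem_biUnion (⟨hgB, hgne⟩ : act g '' B ∈ FF \ {act g '' A}) ?_
      exact ⟨⟨z1, hz1, rfl⟩, ⟨z2, hz2, rfl⟩⟩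
    obtain ⟨w, hw⟩ := hprox z1 z2
    have hwW : (w, w) ∈ W := hWc.closure_subset ((closure_mono hsub) hw)
    simp only [hW, Set.mem_iUnion, exists_prop] at hwW
    obtain ⟨A', hA', B', hB', hwmem⟩ := hwW
    exact hB'.2 (hdisj B' A' (hFFmin B' hB'.1) (hFFmin A' hA')
      ⟨w, hwmem.2, hwmem.1⟩)
  -- M itself belongs to FF
  have hMFF : M ∈ FF := by
    obtain ⟨t₀, ht₀T, hn⟩ := hT 1
    rw [mul_one] at hn
    have ht₀N : t₀ ∈ N := by simpa using N.inv_mem hn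
    exact ⟨t₀, ht₀T, hstab M hM3 ⟨t₀, ht₀N⟩⟩
  -- M is everything
  have hMuniv : M = Set.univ := by
    refine Set.eq_univ_of_univ_subset ?_
    obtain ⟨x₀, hx₀⟩ := hM1
    have hrange : (Set.range fun g : G => act g x₀) ⊆ M := by
      rintro _ ⟨g, rfl⟩
      have : act g '' M ∈ FF := hFFmove g M hMFF
      have hEq : act g '' M = M := hkey _ this _ hMFF
      rw [← hEq]; exact ⟨x₀, hx₀, rfl⟩
    have := closure_mono hrange
    rw [(hmin x₀).closure_eq, hM2.closure_eq] at this
    exact this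
  -- conclude minimality of the restricted action
  intro x
  rw [dense_iff_closure_eq]
  set C : Set X := closure (Set.range fun n : N => act (n : G) x) with hC
  have hCne : C.Nonempty := ⟨x, subset_closure ⟨1, by simpa using h.one x⟩⟩
  have hCinv : ∀ n : N, ∀ y ∈ C, act (n : G) y ∈ C := by
    intro n y hy
    have h1 : act (n : G) '' (Set.range fun m : N => act (m : G) x)
        ⊆ Set.range fun m : N => act (m : G) x := by
      rintro _ ⟨_, ⟨m, rfl⟩, rfl⟩
      exact ⟨n * m, by simp [h.mul]⟩
    have h2 : act (n : G) y ∈ closure (act (n : G) ''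
        (Set.range fun m : N => act (m : G) x)) :=
      image_closure_subset_closure_image (h.cont (n : G)) ⟨y, hy, rfl⟩
    exact closure_mono h1 h2
  have hfin := hM4 C (by rw [hMuniv]; exact Set.subset_univ C) hCne isClosed_closure hCinv
  exact hfin.trans hMuniv

/-- If a compact flow has finitely many separating "coordinates", each equivariant over a
proximal twisted action, then the flow is proximal. -/
theorem prox_of_separating {Γ : Type*} [Group Γ] {Y : Type*} [TopologicalSpace Y]
    [CompactSpace Y] [T2Space Y] {W : Type*} [TopologicalSpace W] [T2Space W]
    {actY : Γ → Y → Y} (hY : IsAct Γ Y actY)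
    {k : ℕ} (e : Fin k → Y → W) (a : Fin k → Γ → W → W)
    (haprox : ∀ i, ProxP (a i))
    (hecont : ∀ i, Continuous (e i))
    (heq : ∀ i γ y, e i (actY γ y) = a i γ (e i y))
    (hsep : ∀ y y' : Y, (∀ i, e i y = e i y') → y = y') :
    ProxP actY := by
  intro y₁ y₂
  set C : Set (Y × Y) := closure (Set.range fun γ => (actY γ y₁, actY γ y₂)) with hCdef
  have hCinv : ∀ γ : Γ, ∀ p ∈ C, (actY γ p.1, actY γ p.2) ∈ C := by
    intro γ p hp
    have hcont : Continuous (fun q : Y × Y => (actY γ q.1, actY γ q.2)) :=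
      ((hY.cont γ).comp continuous_fst).prodMk ((hY.cont γ).comp continuous_snd)
    have h1 : (fun q : Y × Y => (actY γ q.1, actY γ q.2)) ''
        (Set.range fun δ => (actY δ y₁, actY δ y₂))
        ⊆ Set.range fun δ => (actY δ y₁, actY δ y₂) := by
      rintro _ ⟨_, ⟨δ, rfl⟩, rfl⟩
      exact ⟨γ * δ, by simp [hY.mul]⟩
    exact closure_mono h1 (image_closure_subset_closure_image hcont ⟨p, hp, rfl⟩)
  have claim : ∀ s : Finset (Fin k), ∃ z ∈ C, ∀ i ∈ s, e i z.1 = e i z.2 := by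
    intro s
    induction s using Finset.induction_on with
    | empty =>
      exact ⟨(y₁, y₂), subset_closure ⟨1, by simp [hY.one]⟩, by simp⟩
    | @insert j s hj IH =>
      obtain ⟨z, hzC, hzs⟩ := IH
      set C' : Set (Y × Y) := closure (Set.range fun γ => (actY γ z.1, actY γ z.2)) with hC'def
      have hrsub : (Set.range fun γ => (actY γ z.1, actY γ z.2)) ⊆ C :=
        fun _ ⟨γ, hγ⟩ => hγ ▸ hCinv γ z hzC
      have hC'C : C' ⊆ C := closure_minimal hrsub isClosed_closure
      have hD : ∀ p ∈ C', ∀ i ∈ s, e i p.1 = e i p.2 := by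
        have hDc : IsClosed {p : Y × Y | ∀ i ∈ s, e i p.1 = e i p.2} := by
          have : {p : Y × Y | ∀ i ∈ s, e i p.1 = e i p.2}
              = ⋂ i ∈ s, {p : Y × Y | e i p.1 = e i p.2} := by
            ext p; simp
          rw [this]
          exact isClosed_biInter fun i _ =>
            isClosed_eq ((hecont i).comp continuous_fst) ((hecont i).comp continuous_snd)
        have hDr : (Set.range fun γ => (actY γ z.1, actY γ z.2))
            ⊆ {p : Y × Y | ∀ i ∈ s, e i p.1 = e i p.2} := by
          rintro _ ⟨γ, rfl⟩ i hi
          simp only [heq, hzs i hi]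
        exact fun p hp => closure_minimal hDr hDc hp
      set E : Y × Y → W × W := fun p => (e j p.1, e j p.2) with hEdef
      have hEcont : Continuous E := ((hecont j).comp continuous_fst).prodMk
        ((hecont j).comp continuous_snd)
      have hKc : IsClosed (E '' C') := ((isClosed_closure.isCompact).image hEcont).isClosed
      have hKsub : closure (Set.range fun γ => (a j γ (e j z.1), a j γ (e j z.2)))
          ⊆ E '' C' := by
        refine closure_minimal ?_ hKc
        rintro _ ⟨γ, rfl⟩
        exact ⟨(actY γ z.1, actY γ z.2), subset_closure ⟨γ, rfl⟩, by simp [hEdef, heq]⟩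
      obtain ⟨v, hv⟩ := haprox j (e j z.1) (e j z.2)
      obtain ⟨z', hz'C', hz'E⟩ := hKsub hv
      refine ⟨z', hC'C hz'C', fun i hi => ?_⟩
      rcases Finset.mem_insert.mp hi with rfl | his
      · have h1 : e i z'.1 = v := congrArg Prod.fst hz'E
        have h2 : e i z'.2 = v := congrArg Prod.snd hz'E
        rw [h1, h2]
      · exact hD z' hz'C' i his
  obtain ⟨z, hzC, hz⟩ := claim Finset.univ
  have : z.1 = z.2 := hsep _ _ fun i => hz i (Finset.mem_univ i)
  refine ⟨z.1, ?_⟩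
  have hzz : z = (z.1, z.1) := Prod.ext rfl this.symm
  rwa [hzz] at hzC

theorem furstenberg_isomorphism
    (G : Type u) [Group G] [TopologicalSpace G] [IsTopologicalGroup G]
    (S : Subgroup G) (hS : IsClosed (S : Set G)) [S.FiniteIndex]
    -- X = Π(S) : the universal minimal proximal flow of S
    (X : Type v) [TopologicalSpace X] [CompactSpace X] [T2Space X]
    [MulAction S X] [ContinuousSMul S X]
    (hXmin : IsMinimalFlow S X) (hXprox : IsProximalFlow S X)
    (hXuniv : ∀ (Y : Type v) [TopologicalSpace Y] [CompactSpace Y] [T2Space Y]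
      [MulAction S Y] [ContinuousSMul S Y], IsMinimalFlow S Y → IsProximalFlow S Y →
      ∃ f : X → Y, Continuous f ∧ Function.Surjective f ∧
        ∀ (s : S) (x : X), f (s • x) = s • f x)
    -- Z = Π(G) : the universal minimal proximal flow of G
    (Z : Type v) [TopologicalSpace Z] [CompactSpace Z] [T2Space Z]
    [MulAction G Z] [ContinuousSMul G Z]
    (hZmin : IsMinimalFlow G Z) (hZprox : IsProximalFlow G Z)
    (hZuniv : ∀ (Y : Type v) [TopologicalSpace Y] [CompactSpace Y] [T2Space Y]
      [MulAction G Y] [ContinuousSMul G Y], IsMinimalFlow G Y → IsProximalFlow G Y →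
      ∃ f : Z → Y, Continuous f ∧ Function.Surjective f ∧
        ∀ (g : G) (z : Z), f (g • z) = g • f z) :
    -- the S-action on Π(S) extends to a jointly continuous G-action, isomorphic to (G, Π(G));
    -- moreover (G, Π(G)) is free iff the extended flow (G, Π(S)) is free
    ∃ ρ : G → (X ≃ₜ X),
      (∀ g h : G, ρ (g * h) = (ρ h).trans (ρ g)) ∧ ρ 1 = Homeomorph.refl X ∧
      Continuous (fun p : G × X => ρ p.1 p.2) ∧
      (∀ (s : S) (x : X), ρ (s : G) x = s • x) ∧
      (∃ φ : X ≃ₜ Z, ∀ (g : G) (x : X), φ (ρ g x) = g • φ x) ∧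
      ((∀ g : G, g ≠ 1 → ∀ z : Z, g • z ≠ z) ↔ (∀ g : G, g ≠ 1 → ∀ x : X, ρ g x ≠ x)) := by
  classical
  -- X and Z are nonempty (map onto the one-point flow)
  have hXne : Nonempty X := by
    letI : MulAction S PUnit.{v+1} :=
      { smul := fun _ x => x, one_smul := fun _ => rfl, mul_smul := fun _ _ _ => rfl }
    letI : ContinuousSMul S PUnit.{v+1} := ⟨continuous_snd⟩
    have hmin : IsMinimalFlow S PUnit.{v+1} := by
      intro x
      have h1 : (Set.range fun s : S => s • x) = Set.univ :=
        Set.eq_univ_of_forall fun y => ⟨1, Subsingleton.elim _ _⟩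
      rw [h1]; exact dense_univ
    have hprox : IsProximalFlow S PUnit.{v+1} := fun x _ =>
      ⟨x, subset_closure ⟨1, Subsingleton.elim _ _⟩⟩
    obtain ⟨f, -, hsurj, -⟩ := hXuniv PUnit.{v+1} hmin hprox
    obtain ⟨x, -⟩ := hsurj PUnit.unit
    exact ⟨x⟩
  have hZne : Nonempty Z := by
    letI : MulAction G PUnit.{v+1} :=
      { smul := fun _ x => x, one_smul := fun _ => rfl, mul_smul := fun _ _ _ => rfl }
    letI : ContinuousSMul G PUnit.{v+1} := ⟨continuous_snd⟩
    have hmin : IsMinimalFlow G PUnit.{v+1} := by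
      intro x
      have h1 : (Set.range fun g : G => g • x) = Set.univ :=
        Set.eq_univ_of_forall fun y => ⟨1, Subsingleton.elim _ _⟩
      rw [h1]; exact dense_univ
    have hprox : IsProximalFlow G PUnit.{v+1} := fun x _ =>
      ⟨x, subset_closure ⟨1, Subsingleton.elim _ _⟩⟩
    obtain ⟨f, -, hsurj, -⟩ := hZuniv PUnit.{v+1} hmin hprox
    obtain ⟨z, -⟩ := hsurj PUnit.unit
    exact ⟨z⟩
  obtain ⟨x₀⟩ := hXne
  -- basic group-theoretic data
  have hSopen : IsOpen (S : Set G) := Subgroup.isOpen_of_isClosed_of_finiteIndex S hS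
  set N : Subgroup G := S.normalCore with hNdef
  have hNle : N ≤ S := S.normalCore_le
  have hNnormal : N.Normal := S.normalCore_normal
  have hNfin : N.index ≠ 0 := Subgroup.FiniteIndex.index_ne_zero
  obtain ⟨TN, hTN⟩ := exists_transversal N hNfin
  obtain ⟨TS, hTS⟩ := exists_transversal S Subgroup.FiniteIndex.index_ne_zero
  -- Z is a minimal proximal S-flow
  have hActG : IsAct G Z (fun g z => g • z) :=
    ⟨one_smul G, mul_smul, fun g => continuous_const_smul g⟩
  have hZSprox : IsProximalFlow S Z := by
    have := prox_restrict hActG S hTS hZprox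
    exact this
  have hZSmin : IsMinimalFlow S Z := by
    haveI := hNnormal
    have hNZ := min_restrict hActG N hTN hZmin hZprox
    intro z
    refine (hNZ z).mono ?_
    rintro _ ⟨n, rfl⟩
    exact ⟨⟨(n : G), hNle n.2⟩, rfl⟩
  -- the co-induced space
  set Phi : Set (G → X) := {f : G → X | ∀ (s : S) (g : G), f ((s : G) * g) = s • f g}
    with hPhidef
  have hPhiclosed : IsClosed Phi := by
    have h1 : Phi = ⋂ (s : S), ⋂ (g : G), {f : G → X | f ((s : G) * g) = s • f g} := by
      ext f; simp [hPhidef, Set.mem_iInter, Set.mem_setOf_eq]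
    rw [h1]
    exact isClosed_iInter fun s => isClosed_iInter fun g =>
      isClosed_eq (continuous_apply _) ((continuous_apply g).const_smul s)
  haveI : CompactSpace ↥Phi := isCompact_iff_compactSpace.mp hPhiclosed.isCompact
  -- Phi is nonempty
  have hmem₀ : ∀ g : G, g * ((QuotientGroup.mk g⁻¹ : G ⧸ S)).out ∈ S := by
    intro g
    have h1 : ((QuotientGroup.mk (g⁻¹ : G) : G ⧸ S)).out⁻¹ * g⁻¹ ∈ S :=
      QuotientGroup.eq.mp (QuotientGroup.out_eq' (QuotientGroup.mk (g⁻¹ : G) : G ⧸ S))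
    simpa [mul_inv_rev] using S.inv_mem h1
  have hout_eq : ∀ (s : S) (g : G),
      ((QuotientGroup.mk ((s : G) * g)⁻¹ : G ⧸ S)).out
        = ((QuotientGroup.mk g⁻¹ : G ⧸ S)).out := by
    intro s g
    have h1 : (QuotientGroup.mk (((s : G) * g)⁻¹) : G ⧸ S) = QuotientGroup.mk g⁻¹ := by
      rw [QuotientGroup.eq]
      simp [mul_inv_rev, mul_assoc]
    rw [h1]
  have hφ₀mem : (fun g => (⟨g * ((QuotientGroup.mk g⁻¹ : G ⧸ S)).out, hmem₀ g⟩ : S) • x₀)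
      ∈ Phi := by
    intro s g
    simp only
    rw [← mul_smul]
    congr 1
    apply Subtype.ext
    simp [hout_eq s g, mul_assoc]
  haveI hPhine : Nonempty ↥Phi := ⟨⟨_, hφ₀mem⟩⟩
  -- the G-action on Phi
  set actC : G → ↥Phi → ↥Phi := fun g φ => ⟨fun h => φ.1 (h * g), by
    intro s h
    simp only
    rw [mul_assoc]
    exact φ.2 s (h * g)⟩ with hactCdef
  have hActC : IsAct G ↥Phi actC := by
    refine ⟨fun φ => ?_, fun g h φ => ?_, fun g => ?_⟩
    · apply Subtype.ext; funext h; simp [hactCdef]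
    · apply Subtype.ext; funext x; simp [hactCdef, mul_assoc]
    · have hc : Continuous (fun φ : ↥Phi => fun h : G => φ.1 (h * g)) :=
        continuous_pi fun h => (continuous_apply (h * g)).comp continuous_subtype_val
      exact hc.subtype_mk _
  -- joint continuity of the action (uses that S is open)
  have hjoint0 : Continuous (fun p : G × ↥Phi => fun h : G => p.2.1 (h * p.1)) := by
    refine continuous_pi fun h₀ => ?_
    rw [continuous_iff_continuousAt]
    rintro ⟨g₀, ψ₀⟩
    set σ : G → G := fun g => h₀ * g * (h₀ * g₀)⁻¹ with hσdef
    have hσcont : Continuous σ := by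
      simp only [hσdef]
      exact (continuous_const.mul continuous_id).mul continuous_const
    set V : Set G := σ ⁻¹' (S : Set G) with hVdef
    have hVopen : IsOpen V := hSopen.preimage hσcont
    have hg₀V : g₀ ∈ V := by
      have h1 : σ g₀ = 1 := by rw [hσdef]; group
      simp only [hVdef, Set.mem_preimage, h1]
      exact S.one_mem
    set τ' : G → S := fun g => if hg : σ g ∈ S then ⟨σ g, hg⟩ else 1 with hτ'def
    have hτ'cont : ContinuousAt τ' g₀ := by
      have hev : (fun g => ((τ' g : S) : G)) =ᶠ[nhds g₀] σ := by
        filter_upwards [hVopen.mem_nhds hg₀V] with g hg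
        have hgS : σ g ∈ S := hg
        simp only [hτ'def]
        rw [dif_pos hgS]
      have hval : ContinuousAt (fun g => ((τ' g : S) : G)) g₀ :=
        hσcont.continuousAt.congr hev.symm
      rw [ContinuousAt, nhds_subtype_eq_comap, Filter.tendsto_comap_iff]
      exact hval
    have hΦeq : ∀ p : G × ↥Phi, p.1 ∈ V →
        p.2.1 (h₀ * p.1) = τ' p.1 • p.2.1 (h₀ * g₀) := by
      rintro ⟨g, φ⟩ hg
      have hσS : σ g ∈ S := hg
      have hdecomp : h₀ * g = (σ g) * (h₀ * g₀) := by rw [hσdef]; group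
      simp only
      rw [hdecomp]
      have h2 := φ.2 ⟨σ g, hσS⟩ (h₀ * g₀)
      rw [h2]
      congr 1
      simp only [hτ'def]
      rw [dif_pos hσS]
    have hΦcont : ContinuousAt (fun p : G × ↥Phi => τ' p.1 • p.2.1 (h₀ * g₀)) (g₀, ψ₀) := by
      have h1 : ContinuousAt (fun p : G × ↥Phi => ((τ' p.1, p.2.1 (h₀ * g₀)) : S × X))
          (g₀, ψ₀) :=
        (ContinuousAt.comp (f := Prod.fst) (x := (g₀, ψ₀)) hτ'cont continuousAt_fst).prodMk
          ((((continuous_apply (h₀ * g₀)).comp continuous_subtype_val).comp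
            continuous_snd).continuousAt)
      exact (continuous_smul.continuousAt).comp h1
    refine hΦcont.congr ?_
    filter_upwards [prod_mem_nhds (hVopen.mem_nhds hg₀V) Filter.univ_mem] with p hp
    exact (hΦeq p hp.1).symm
  have hjoint : Continuous (fun p : G × ↥Phi => actC p.1 p.2) := hjoint0.subtype_mk _
  -- the subgroup N viewed inside S, with finite index
  set K : Subgroup ↥S := N.subgroupOf S with hKdef
  have hKfin : K.index ≠ 0 := by
    haveI := hNnormal
    have hdvd : N.relIndex S ∣ N.index := Subgroup.relIndex_dvd_index_of_normal N S
    intro h0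
    exact hNfin (zero_dvd_iff.mp (h0 ▸ hdvd))
  obtain ⟨TK, hTK⟩ := exists_transversal K hKfin
  have hActS : IsAct ↥S X (fun s x => s • x) :=
    ⟨one_smul _, mul_smul, fun s => continuous_const_smul s⟩
  have hKprox : ProxP (fun kk : ↥K => fun x : X => ((kk : ↥S)) • x) :=
    prox_restrict hActS K hTK hXprox
  -- a finite right transversal of S, indexed by Fin
  set τ : Fin TS.card → G := fun i => ((TS.equivFin.symm i : G))⁻¹ with hτdef
  have hτprop : ∀ g : G, ∃ i : Fin TS.card, g * (τ i)⁻¹ ∈ S := by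
    intro g
    obtain ⟨t, htT, hts⟩ := hTS g⁻¹
    refine ⟨TS.equivFin ⟨t, htT⟩, ?_⟩
    have h1 : τ (TS.equivFin ⟨t, htT⟩) = t⁻¹ := by simp [hτdef]
    rw [h1, inv_inv]
    simpa [mul_inv_rev] using S.inv_mem hts
  -- twisted coordinate actions
  have hconj : ∀ (i : Fin TS.card) (n : ↥N), τ i * (n : G) * (τ i)⁻¹ ∈ N := by
    intro i n
    exact hNnormal.conj_mem _ n.2 (τ i)
  set aEl : Fin TS.card → ↥N → ↥S :=
    fun i n => ⟨τ i * (n : G) * (τ i)⁻¹, hNle (hconj i n)⟩ with haEldef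
  set a : Fin TS.card → ↥N → X → X := fun i n x => aEl i n • x with hadef
  have haprox : ∀ i, ProxP (a i) := by
    intro i x y
    obtain ⟨z, hz⟩ := hKprox x y
    refine ⟨z, ?_⟩
    have hre : (Set.range fun n : ↥N => (a i n x, a i n y))
        = Set.range fun kk : ↥K => (((kk : ↥S)) • x, ((kk : ↥S)) • y) := by
      ext p
      constructor
      · rintro ⟨n, rfl⟩
        exact ⟨⟨aEl i n, (Subgroup.mem_subgroupOf).mpr (hconj i n)⟩, rfl⟩
      · rintro ⟨kk, rfl⟩
        have hmem : (τ i)⁻¹ * ((kk : ↥S) : G) * τ i ∈ N := by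
          have := hNnormal.conj_mem _ ((Subgroup.mem_subgroupOf).mp kk.2) (τ i)⁻¹
          simpa using this
        refine ⟨⟨(τ i)⁻¹ * ((kk : ↥S) : G) * τ i, hmem⟩, ?_⟩
        have he : aEl i ⟨(τ i)⁻¹ * ((kk : ↥S) : G) * τ i, hmem⟩ = (kk : ↥S) := by
          apply Subtype.ext
          simp [haEldef]
          group
        simp only [hadef, he]
    rw [hre]
    exact hz
  -- proximality of the co-induced flow
  have hNactC : IsAct ↥N ↥Phi (fun n φ => actC (n : G) φ) := by
    refine ⟨fun φ => ?_, fun n m φ => ?_, fun n => hActC.cont _⟩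
    · simpa using hActC.one φ
    · simpa using hActC.mul (n : G) (m : G) φ
  have hproxCN : ProxP (fun n : ↥N => fun φ : ↥Phi => actC (n : G) φ) := by
    refine prox_of_separating hNactC (fun i (φ : ↥Phi) => φ.1 (τ i)) a haprox
      (fun i => (continuous_apply (τ i)).comp continuous_subtype_val) ?_ ?_
    · intro i n φ
      show φ.1 (τ i * (n : G)) = aEl i n • φ.1 (τ i)
      have h2 : ((aEl i n : ↥S) : G) * τ i = τ i * (n : G) := by
        simp only [haEldef]
        group
      rw [← h2]
      exact φ.2 (aEl i n) (τ i)
    · intro φ ψ hall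
      apply Subtype.ext
      funext g
      obtain ⟨i, hi⟩ := hτprop g
      have h3 : φ.1 (τ i) = ψ.1 (τ i) := hall i
      have hg : g = ((⟨g * (τ i)⁻¹, hi⟩ : ↥S) : G) * τ i := by group
      calc φ.1 g = φ.1 (((⟨g * (τ i)⁻¹, hi⟩ : ↥S) : G) * τ i) := by rw [← hg]
        _ = (⟨g * (τ i)⁻¹, hi⟩ : ↥S) • φ.1 (τ i) := φ.2 _ _
        _ = (⟨g * (τ i)⁻¹, hi⟩ : ↥S) • ψ.1 (τ i) := by rw [h3]
        _ = ψ.1 (((⟨g * (τ i)⁻¹, hi⟩ : ↥S) : G) * τ i) := (ψ.2 _ _).symm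
        _ = ψ.1 g := by rw [← hg]
  have hproxC : ProxP actC := by
    intro φ ψ
    obtain ⟨z, hz⟩ := hproxCN φ ψ
    refine ⟨z, closure_mono ?_ hz⟩
    rintro _ ⟨n, rfl⟩
    exact ⟨(n : G), rfl⟩
  -- transport Phi to a space in universe v
  set r : ↥Phi → (Fin TS.card → X) := fun φ i => φ.1 (τ i) with hrdef
  have hrcont : Continuous r :=
    continuous_pi fun i => (continuous_apply (τ i)).comp continuous_subtype_val
  have hrinj : Function.Injective r := by
    intro φ ψ hfψ
    apply Subtype.ext
    funext g
    obtain ⟨i, hi⟩ := hτprop g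
    have h3 : φ.1 (τ i) = ψ.1 (τ i) := congrFun hfψ i
    have hg : g = ((⟨g * (τ i)⁻¹, hi⟩ : ↥S) : G) * τ i := by group
    calc φ.1 g = φ.1 (((⟨g * (τ i)⁻¹, hi⟩ : ↥S) : G) * τ i) := by rw [← hg]
      _ = (⟨g * (τ i)⁻¹, hi⟩ : ↥S) • φ.1 (τ i) := φ.2 _ _
      _ = (⟨g * (τ i)⁻¹, hi⟩ : ↥S) • ψ.1 (τ i) := by rw [h3]
      _ = ψ.1 (((⟨g * (τ i)⁻¹, hi⟩ : ↥S) : G) * τ i) := (ψ.2 _ _).symm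
      _ = ψ.1 g := by rw [← hg]
  set Y₀ : Set (Fin TS.card → X) := Set.range r with hY₀def
  haveI : CompactSpace ↥Y₀ := isCompact_iff_compactSpace.mp (isCompact_range hrcont)
  set re : ↥Phi ≃ₜ ↥Y₀ :=
    Continuous.homeoOfEquivCompactToT2 (f := Equiv.ofInjective r hrinj)
      (continuous_induced_rng.2 hrcont) with hredef
  set actY : G → ↥Y₀ → ↥Y₀ := fun g y => re (actC g (re.symm y)) with hactYdef
  have hActY : IsAct G ↥Y₀ actY := by
    refine ⟨fun y => ?_, fun g h y => ?_,
      fun g => re.continuous.comp ((hActC.cont g).comp re.symm.continuous)⟩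
    · simp [hactYdef, hActC.one]
    · simp [hactYdef, hActC.mul, re.symm_apply_apply]
  have hjointY : Continuous (fun p : G × ↥Y₀ => actY p.1 p.2) := by
    have h1 : Continuous (fun p : G × ↥Y₀ => ((p.1, re.symm p.2) : G × ↥Phi)) :=
      continuous_fst.prodMk (re.symm.continuous.comp continuous_snd)
    exact re.continuous.comp (hjoint.comp h1)
  have hproxY : ProxP actY := by
    intro y₁ y₂
    obtain ⟨z, hz⟩ := hproxC (re.symm y₁) (re.symm y₂)
    refine ⟨re z, ?_⟩
    have hm : Continuous (fun p : ↥Phi × ↥Phi => ((re p.1, re p.2) : ↥Y₀ × ↥Y₀)) :=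
      (re.continuous.comp continuous_fst).prodMk (re.continuous.comp continuous_snd)
    have himg : (fun p : ↥Phi × ↥Phi => ((re p.1, re p.2) : ↥Y₀ × ↥Y₀)) ''
        (Set.range fun g : G => (actC g (re.symm y₁), actC g (re.symm y₂)))
        ⊆ Set.range fun g : G => (actY g y₁, actY g y₂) := by
      rintro _ ⟨_, ⟨g, rfl⟩, rfl⟩
      exact ⟨g, by simp [hactYdef]⟩
    exact closure_mono himg (image_closure_subset_closure_image hm ⟨(z, z), hz, rfl⟩)
  -- the minimal subflow of Y₀
  haveI : Nonempty ↥Y₀ := ⟨re ⟨_, hφ₀mem⟩⟩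
  obtain ⟨M, hM1, hM2, hM3, hM4⟩ := exists_minimal_set hActY
  haveI : Nonempty ↥M := hM1.to_subtype
  haveI : CompactSpace ↥M := isCompact_iff_compactSpace.mp hM2.isCompact
  letI iSMul : SMul G ↥M := ⟨fun g m => ⟨actY g m.1, hM3 g m.1 m.2⟩⟩
  letI iMA : MulAction G ↥M :=
    { toSMul := iSMul
      one_smul := fun m => Subtype.ext (hActY.one m.1)
      mul_smul := fun g h m => Subtype.ext (hActY.mul g h m.1) }
  letI iCS : ContinuousSMul G ↥M := by
    refine ⟨?_⟩
    have h1 : Continuous (fun p : G × ↥M => actY p.1 p.2.1) :=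
      hjointY.comp (continuous_fst.prodMk (continuous_subtype_val.comp continuous_snd))
    exact h1.subtype_mk _
  have hYMmin : IsMinimalFlow G ↥M := by
    intro m
    have hCM : closure (Set.range fun g : G => actY g m.1) = M := by
      refine hM4 _ (closure_minimal ?_ hM2)
        ⟨m.1, subset_closure ⟨1, hActY.one m.1⟩⟩ isClosed_closure ?_
      · rintro _ ⟨g, rfl⟩; exact hM3 g m.1 m.2
      · intro g y hy
        have h1 : actY g '' (Set.range fun d : G => actY d m.1)
            ⊆ Set.range fun d : G => actY d m.1 := by
          rintro _ ⟨_, ⟨d, rfl⟩, rfl⟩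
          exact ⟨g * d, (hActY.mul g d m.1)⟩
        exact closure_mono h1 (image_closure_subset_closure_image (hActY.cont g) ⟨y, hy, rfl⟩)
    intro y
    rw [closure_subtype]
    have himg : (Subtype.val '' Set.range fun g : G => g • m)
        = Set.range fun g : G => actY g m.1 := by
      ext w
      constructor
      · rintro ⟨_, ⟨g, rfl⟩, rfl⟩; exact ⟨g, rfl⟩
      · rintro ⟨g, rfl⟩; exact ⟨g • m, ⟨g, rfl⟩, rfl⟩
    rw [himg, hCM]
    exact y.2
  have hYMprox : IsProximalFlow G ↥M := by
    intro x y
    obtain ⟨z, hz⟩ := hproxY x.1 y.1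
    have hsubMM : (Set.range fun g : G => (actY g x.1, actY g y.1)) ⊆ M ×ˢ M := by
      rintro _ ⟨g, rfl⟩
      exact ⟨hM3 g x.1 x.2, hM3 g y.1 y.2⟩
    have hzMM : (z, z) ∈ M ×ˢ M := closure_minimal hsubMM (hM2.prod hM2) hz
    refine ⟨⟨z, hzMM.1⟩, ?_⟩
    set e : ↥M × ↥M → ↥Y₀ × ↥Y₀ := fun p => (p.1.1, p.2.1) with hedef
    have hecont : Continuous e :=
      (continuous_subtype_val.comp continuous_fst).prodMk
        (continuous_subtype_val.comp continuous_snd)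
    have hKc : IsClosed (e '' closure (Set.range fun g : G => (g • x, g • y))) :=
      ((isClosed_closure.isCompact).image hecont).isClosed
    have hsube : (Set.range fun g : G => (actY g x.1, actY g y.1))
        ⊆ e '' closure (Set.range fun g : G => (g • x, g • y)) := by
      rintro _ ⟨g, rfl⟩
      exact ⟨(g • x, g • y), subset_closure ⟨g, rfl⟩, rfl⟩
    have hze : (z, z) ∈ e '' closure (Set.range fun g : G => (g • x, g • y)) :=
      (closure_minimal hsube hKc) hz
    obtain ⟨p, hp, hpe⟩ := hze
    have hp1 : p.1 = (⟨z, hzMM.1⟩ : ↥M) := Subtype.ext (congrArg Prod.fst hpe)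
    have hp2 : p.2 = (⟨z, hzMM.1⟩ : ↥M) := Subtype.ext (congrArg Prod.snd hpe)
    have hpp : p = ((⟨z, hzMM.1⟩ : ↥M), (⟨z, hzMM.1⟩ : ↥M)) := Prod.ext hp1 hp2
    rwa [hpp] at hp
  -- map from Z to the subflow, and back to X
  obtain ⟨F, hFc, hFsurj, hFeq⟩ := hZuniv ↥M hYMmin hYMprox
  set h : Z → X := fun z => (re.symm (F z).1).1 1 with hhdef
  have hhc : Continuous h :=
    ((continuous_apply (1 : G)).comp continuous_subtype_val).comp
      (re.symm.continuous.comp (continuous_subtype_val.comp hFc))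
  have hheq : ∀ (s : S) (z : Z), h (s • z) = s • h z := by
    intro s z
    have h1 : F (s • z) = (s : G) • F z := hFeq (s : G) z
    have h2 : re.symm ((s : G) • F z).1 = actC ((s : G)) (re.symm (F z).1) := by
      show re.symm (actY ((s : G)) (F z).1) = _
      simp [hactYdef]
    calc h (s • z) = (re.symm (F (s • z)).1).1 1 := rfl
      _ = (re.symm ((s : G) • F z).1).1 1 := by rw [h1]
      _ = (actC ((s : G)) (re.symm (F z).1)).1 1 := by rw [h2]
      _ = (re.symm (F z).1).1 ((s : G) * 1) := by
            show (re.symm (F z).1).1 (1 * (s : G)) = _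
            rw [one_mul, mul_one]
      _ = s • (re.symm (F z).1).1 1 := (re.symm (F z).1).2 s 1
      _ = s • h z := rfl
  -- the universal map from X to Z, and the isomorphism
  obtain ⟨f, hfc, hfsurj, hfeq⟩ := hXuniv Z hZSmin hZSprox
  haveI : Nonempty X := ⟨x₀⟩
  haveI := hZne
  have hActSZ : IsAct ↥S Z (fun s z => s • z) :=
    ⟨one_smul _, mul_smul, fun s => continuous_const_smul s⟩
  have hfh : f ∘ h = id := by
    refine hom_unique hActSZ hActSZ hZSmin hZSprox (hfc.comp hhc) continuous_id ?_ ?_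
    · intro s z
      show f (h (s • z)) = s • f (h z)
      rw [hheq, hfeq]
    · intro s z
      rfl
  have hhf : h ∘ f = id := by
    refine hom_unique hActS hActS hXmin hXprox (hhc.comp hfc) continuous_id ?_ ?_
    · intro s x
      show h (f (s • x)) = s • h (f x)
      rw [hfeq, hheq]
    · intro s x
      rfl
  have hfinj : Function.Injective f := by
    intro a b hab
    calc a = h (f a) := (congrFun hhf a).symm
      _ = h (f b) := by rw [hab]
      _ = b := congrFun hhf b
  set φh : X ≃ₜ Z :=
    Continuous.homeoOfEquivCompactToT2 (f := Equiv.ofBijective f ⟨hfinj, hfsurj⟩) hfc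
    with hφhdef
  have hφhf : ∀ x, φh x = f x := fun x => rfl
  refine ⟨fun g => (φh.trans (Homeomorph.smul g)).trans φh.symm, ?_, ?_, ?_, ?_, ?_, ?_⟩
  · intro g h'
    ext x
    show φh.symm ((g * h') • φh x) = φh.symm (g • φh (φh.symm (h' • φh x)))
    rw [φh.apply_symm_apply, mul_smul]
  · ext x
    show φh.symm ((1 : G) • φh x) = x
    rw [one_smul, φh.symm_apply_apply]
  · show Continuous fun p : G × X => φh.symm (p.1 • φh p.2)
    exact φh.symm.continuous.comp (continuous_smul.comp
      (continuous_fst.prodMk (φh.continuous.comp continuous_snd)))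
  · intro s x
    show φh.symm ((s : G) • φh x) = s • x
    have h1 : (s : G) • φh x = φh (s • x) := by
      show (s : G) • f x = f (s • x)
      exact (hfeq s x).symm
    rw [h1, φh.symm_apply_apply]
  · refine ⟨φh, fun g x => ?_⟩
    show φh (φh.symm (g • φh x)) = g • φh x
    exact φh.apply_symm_apply _
  · constructor
    · intro hfree g hg x hx
      have hx' : φh.symm (g • φh x) = x := hx
      have h2 := congrArg φh hx'
      rw [φh.apply_symm_apply] at h2
      exact hfree g hg (φh x) h2
    · intro hfree g hg z hz
      obtain ⟨x, rfl⟩ := φh.surjective z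
      have h1 : φh.symm (g • φh x) = x := by rw [hz, φh.symm_apply_apply]
      exact hfree g hg x h1
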